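/- An orientation of a split graph S = (E, K) (independent set E, clique K) is semi-transitive if and only if: (1) K is transitively oriented; (2) every vertex of E is of type A, B, or C with its clique-neighbours forming the consecutive segments described below; and (3) for every type C vertex x with break pair (x_s, x_{s+1}), no type A or type B vertex is adjacent to both x_s and x_{s+1}, and no other type C vertex has both x_s and x_{s+1} inside its in-neighbour segment or both inside its out-neighbour segment. -/

import Mathlib

/-- `R` is an orientation of `G`: `R` holds only on edges, and each edge gets
exactly one direction. -/
def IsOrientation {V : Type*} (G : SimpleGraph V) (R : V → V → Prop) : Prop :=
  (∀ x y, R x y → G.Adj x y) ∧ ∀ x y, G.Adj x y → (R x y ↔ ¬ R y x)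

/-- `R` has no directed cycles. -/
def Acyclic {V : Type*} (R : V → V → Prop) : Prop :=
  ∀ v, ¬ Relation.TransGen R v v

/-- `R` is semi-transitive: acyclic, and every directed path `p 0 → ⋯ → p k`
whose endpoints are joined by the edge `p 0 → p k` is fully transitive. -/
def SemiTransitive {V : Type*} (R : V → V → Prop) : Prop :=
  Acyclic R ∧
  ∀ (k : ℕ) (p : Fin (k + 1) → V),
    (∀ i : Fin k, R (p i.castSucc) (p i.succ)) →
    R (p 0) (p (Fin.last k)) →
    ∀ i j : Fin (k + 1), i < j → R (p i) (p j)

/-- `x` is of type A w.r.t. the clique enumeration `c`: all its clique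
neighbours point into `x`, and they form a consecutive segment of the
Hamiltonian path of the clique. -/
def TypeA {V : Type*} (G : SimpleGraph V) (R : V → V → Prop)
    {m : ℕ} (c : Fin m → V) (x : V) : Prop :=
  (∀ a : Fin m, G.Adj x (c a) → R (c a) x) ∧
  (∀ a k b : Fin m, a ≤ k → k ≤ b →
    G.Adj x (c a) → G.Adj x (c b) → G.Adj x (c k))

/-- `x` is of type B w.r.t. the clique enumeration `c`: all its clique
neighbours point out of `x`, and they form a consecutive segment of the
Hamiltonian path of the clique. -/
def TypeB {V : Type*} (G : SimpleGraph V) (R : V → V → Prop)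
    {m : ℕ} (c : Fin m → V) (x : V) : Prop :=
  (∀ a : Fin m, G.Adj x (c a) → R x (c a)) ∧
  (∀ a k b : Fin m, a ≤ k → k ≤ b →
    G.Adj x (c a) → G.Adj x (c b) → G.Adj x (c k))

/-- `x` is of type C w.r.t. the clique enumeration `c`: its in-neighbours
form a consecutive initial segment (the source-group) `{0,…,s}` and its
out-neighbours a consecutive final segment (the sink-group) `{t,…}` of the
Hamiltonian path of the clique; `(c s, c t)` is the break pair of `x`. -/
def TypeC {V : Type*} (G : SimpleGraph V) (R : V → V → Prop)
    {m : ℕ} (c : Fin m → V) (x : V) : Prop :=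
  ∃ s t : Fin m, s < t ∧
    (∀ a : Fin m, R (c a) x ↔ a ≤ s) ∧
    (∀ a : Fin m, R x (c a) ↔ t ≤ a)

private theorem chain4_aux {V : Type*} {R : V → V → Prop} (hST : SemiTransitive R)
    {v0 v1 v2 v3 : V}
    (h01 : R v0 v1) (h12 : R v1 v2) (h23 : R v2 v3) (h03 : R v0 v3) :
    R v0 v2 ∧ R v1 v3 := by
  have h := hST.2 3 ![v0,v1,v2,v3] (by
    intro i
    fin_cases i <;> simpa using ‹_›) (by simpa [Fin.last] using h03)
  exact ⟨by simpa using h 0 2 (by decide), by simpa using h 1 3 (by decide)⟩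

private theorem split_fw {V : Type*} [Fintype V]
    (G : SimpleGraph V) (K : Set V)
    (hclique : ∀ u ∈ K, ∀ v ∈ K, u ≠ v → G.Adj u v)
    (hind : ∀ u ∉ K, ∀ v ∉ K, ¬ G.Adj u v)
    (R : V → V → Prop) (hor : IsOrientation G R) (hST : SemiTransitive R) :
    ∃ (m : ℕ) (c : Fin m → V), Function.Injective c ∧ Set.range c = K ∧
      (∀ a b : Fin m, R (c a) (c b) ↔ a < b) ∧
      (∀ x, x ∉ K → (TypeA G R c x ∨ TypeB G R c x ∨ TypeC G R c x)) ∧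
      (∀ x, x ∉ K → ∀ s t : Fin m, s < t →
        (∀ a : Fin m, R (c a) x ↔ a ≤ s) →
        (∀ a : Fin m, R x (c a) ↔ t ≤ a) →
        ∀ y, y ∉ K → y ≠ x →
          (((TypeA G R c y ∨ TypeB G R c y) →
              ¬ (G.Adj y (c s) ∧ G.Adj y (c t))) ∧
           (∀ s' t' : Fin m, s' < t' →
              (∀ a : Fin m, R (c a) y ↔ a ≤ s') →
              (∀ a : Fin m, R y (c a) ↔ t' ≤ a) →
              ¬ t ≤ s' ∧ ¬ t' ≤ s))) := by
  classical
  have hAdj : ∀ u v, R u v → G.Adj u v := hor.1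
  have hnot : ∀ u v, R u v → ¬ R v u := fun u v h h' => ((hor.2 u v (hor.1 u v h)).mp h) h'
  have hirr : ∀ v, ¬ R v v := fun v h => G.irrefl (hor.1 v v h)
  have htransK : ∀ u ∈ K, ∀ v ∈ K, ∀ w ∈ K, R u v → R v w → R u w := by
    intro u hu v hv w hw huv hvw
    by_cases huw : u = w
    · exact absurd hvw (huw ▸ hnot _ _ huv)
    by_cases h : R u w
    · exact h
    · have hwu : R w u := (hor.2 w u (hclique u hu w hw huw).symm).mpr h
      exact (hST.1 u (Relation.TransGen.head huv
        (Relation.TransGen.head hvw (Relation.TransGen.single hwu)))).elim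
  have htot : ∀ u ∈ K, ∀ v ∈ K, u ≠ v → R u v ∨ R v u := by
    intro u hu v hv hne
    by_cases h : R u v
    · exact Or.inl h
    · exact Or.inr ((hor.2 v u (hclique u hu v hv hne).symm).mpr h)
  letI : LinearOrder ↥K :=
  { le := fun u v => u = v ∨ R u.1 v.1
    lt := fun u v => R u.1 v.1
    le_refl := fun u => Or.inl rfl
    le_trans := by
      rintro u v w (rfl | huv) hvw
      · exact hvw
      · rcases hvw with rfl | hvw
        · exact Or.inr huv
        · exact Or.inr (htransK u.1 u.2 v.1 v.2 w.1 w.2 huv hvw)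
    le_antisymm := by
      rintro u v (rfl | huv) hvu
      · rfl
      · rcases hvu with rfl | hvu
        · rfl
        · exact absurd hvu (hnot _ _ huv)
    le_total := by
      intro u v
      by_cases h : u = v
      · exact Or.inl (Or.inl h)
      · rcases htot u.1 u.2 v.1 v.2 (fun hh => h (Subtype.ext hh)) with h' | h'
        · exact Or.inl (Or.inr h')
        · exact Or.inr (Or.inr h')
    lt_iff_le_not_ge := by
      intro u v
      constructor
      · intro h
        refine ⟨Or.inr h, ?_⟩
        rintro (rfl | h')
        · exact hirr _ h
        · exact hnot _ _ h h'
      · rintro ⟨(rfl | h), h2⟩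
        · exact absurd (Or.inl rfl) h2
        · exact h
    toDecidableLE := fun _ _ => Classical.dec _ }
  haveI : Fintype ↥K := Fintype.ofFinite _
  refine ⟨Fintype.card ↥K, fun a => ((monoEquivOfFin ↥K rfl) a).1, ?_, ?_, ?_, ?_, ?_⟩
  · exact fun a b h => (monoEquivOfFin ↥K rfl).injective (Subtype.ext h)
  · ext v
    constructor
    · rintro ⟨a, rfl⟩; exact ((monoEquivOfFin ↥K rfl) a).2
    · intro hv; exact ⟨(monoEquivOfFin ↥K rfl).symm ⟨v, hv⟩, by simp⟩
  · intro a b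
    rw [show R (((monoEquivOfFin ↥K rfl) a)).1 (((monoEquivOfFin ↥K rfl) b)).1 ↔
        (monoEquivOfFin ↥K rfl) a < (monoEquivOfFin ↥K rfl) b from Iff.rfl]
    exact (monoEquivOfFin ↥K rfl).lt_iff_lt
  · -- classification
    set c : Fin (Fintype.card ↥K) → V := fun a => ((monoEquivOfFin ↥K rfl) a).1 with hcdef
    have hcl : ∀ a b, R (c a) (c b) ↔ a < b := by
      intro a b
      rw [show R (c a) (c b) ↔
          (monoEquivOfFin ↥K rfl) a < (monoEquivOfFin ↥K rfl) b from Iff.rfl]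
      exact (monoEquivOfFin ↥K rfl).lt_iff_lt
    intro x hx
    by_cases hOut : ∃ a, R x (c a)
    · by_cases hIn : ∃ a, R (c a) x
      · right; right
        obtain hSne' := hIn
        set S : Finset (Fin (Fintype.card ↥K)) :=
          Finset.univ.filter (fun a => R (c a) x) with hSdef
        set T : Finset (Fin (Fintype.card ↥K)) :=
          Finset.univ.filter (fun a => R x (c a)) with hTdef
        have hSne : S.Nonempty := hIn.elim fun a ha => ⟨a, by simp [hSdef, ha]⟩
        have hTne : T.Nonempty := hOut.elim fun a ha => ⟨a, by simp [hTdef, ha]⟩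
        set s := S.max' hSne with hsdef
        set t := T.min' hTne with htdef
        have hs : R (c s) x := (Finset.mem_filter.mp (S.max'_mem hSne)).2
        have ht : R x (c t) := (Finset.mem_filter.mp (T.min'_mem hTne)).2
        have hsmax : ∀ a, R (c a) x → a ≤ s := fun a ha =>
          S.le_max' a (by simp [hSdef, ha])
        have htmin : ∀ a, R x (c a) → t ≤ a := fun a ha =>
          T.min'_le a (by simp [hTdef, ha])
        have hst : s < t := by
          rcases lt_trichotomy s t with h | h | h
          · exact h
          · rw [← h] at ht; exact absurd ht (hnot _ _ hs)
          · exact (hST.1 x (Relation.TransGen.head ht (Relation.TransGen.head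
              ((hcl t s).mpr h) (Relation.TransGen.single hs)))).elim
        refine ⟨s, t, hst, ?_, ?_⟩
        · intro a
          constructor
          · exact hsmax a
          · intro ha
            rcases eq_or_lt_of_le ha with rfl | ha
            · exact hs
            · exact (chain4_aux hST ((hcl a s).mpr ha) hs ht
                ((hcl a t).mpr (lt_trans ha hst))).1
        · intro a
          constructor
          · exact htmin a
          · intro ha
            rcases eq_or_lt_of_le ha with rfl | ha
            · exact ht
            · exact (chain4_aux hST hs ht ((hcl t a).mpr ha)
                ((hcl s a).mpr (lt_trans hst ha))).2
      · right; left
        have hOutDir : ∀ a, G.Adj x (c a) → R x (c a) := by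
          intro a ha
          by_contra h
          have : R (c a) x := by
            by_contra h2
            exact h2 ((hor.2 (c a) x ha.symm).mpr h)
          exact hIn ⟨a, this⟩
        refine ⟨hOutDir, ?_⟩
        intro a kk b hak hkb ha hb
        rcases eq_or_lt_of_le hak with rfl | hak
        · exact ha
        rcases eq_or_lt_of_le hkb with rfl | hkb
        · exact hb
        exact hAdj _ _ (chain4_aux hST (hOutDir a ha) ((hcl a kk).mpr hak)
          ((hcl kk b).mpr hkb) (hOutDir b hb)).1
    · left
      have hInDir : ∀ a, G.Adj x (c a) → R (c a) x := by
        intro a ha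
        by_contra h
        exact hOut ⟨a, (hor.2 x (c a) ha).mpr h⟩
      refine ⟨hInDir, ?_⟩
      intro a kk b hak hkb ha hb
      rcases eq_or_lt_of_le hak with rfl | hak
      · exact ha
      rcases eq_or_lt_of_le hkb with rfl | hkb
      · exact hb
      exact (hAdj _ _ (chain4_aux hST ((hcl a kk).mpr hak) ((hcl kk b).mpr hkb)
        (hInDir b hb) (hInDir a ha)).2).symm
  · -- condition (3)
    set c : Fin (Fintype.card ↥K) → V := fun a => ((monoEquivOfFin ↥K rfl) a).1 with hcdef
    intro x hx s t hst hin hout y hy hyx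
    have hxs : R (c s) x := (hin s).mpr le_rfl
    have hxt : R x (c t) := (hout t).mpr le_rfl
    have hnRxy : ¬ R x y := fun h => hind x hx y hy (hAdj _ _ h)
    have hnRyx : ¬ R y x := fun h => hind y hy x hx (hAdj _ _ h)
    have keyA : R (c s) y → R (c t) y → False := fun h1 h2 =>
      hnRxy (chain4_aux hST hxs hxt h2 h1).2
    have keyB : R y (c s) → R y (c t) → False := fun h1 h2 =>
      hnRyx (chain4_aux hST h1 hxs hxt h2).1
    constructor
    · rintro (hA | hB) ⟨hadjs, hadjt⟩
      · exact keyA (hA.1 s hadjs) (hA.1 t hadjt)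
      · exact keyB (hB.1 s hadjs) (hB.1 t hadjt)
    · intro s' t' hs't' hin' hout'
      constructor
      · intro h
        exact keyA ((hin' s).mpr (le_trans hst.le h)) ((hin' t).mpr h)
      · intro h
        exact keyB ((hout' s).mpr h) ((hout' t).mpr (le_trans h hst.le))

private theorem split_bw {V : Type*} [Fintype V]
    (G : SimpleGraph V) (K : Set V)
    (hind : ∀ u ∉ K, ∀ v ∉ K, ¬ G.Adj u v)
    (R : V → V → Prop) (hor : IsOrientation G R)
    {m : ℕ} (c : Fin m → V) (hinj : Function.Injective c) (hrange : Set.range c = K)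
    (hcl : ∀ a b : Fin m, R (c a) (c b) ↔ a < b)
    (htypes : ∀ x, x ∉ K → (TypeA G R c x ∨ TypeB G R c x ∨ TypeC G R c x))
    (hcond : ∀ x, x ∉ K → ∀ s t : Fin m, s < t →
        (∀ a : Fin m, R (c a) x ↔ a ≤ s) →
        (∀ a : Fin m, R x (c a) ↔ t ≤ a) →
        ∀ y, y ∉ K → y ≠ x →
          (((TypeA G R c y ∨ TypeB G R c y) →
              ¬ (G.Adj y (c s) ∧ G.Adj y (c t))) ∧
           (∀ s' t' : Fin m, s' < t' →
              (∀ a : Fin m, R (c a) y ↔ a ≤ s') →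
              (∀ a : Fin m, R y (c a) ↔ t' ≤ a) →
              ¬ t ≤ s' ∧ ¬ t' ≤ s))) :
    SemiTransitive R := by
  classical
  have hAdj : ∀ u v, R u v → G.Adj u v := hor.1
  have hnot : ∀ u v, R u v → ¬ R v u := fun u v h h' => ((hor.2 u v (hor.1 u v h)).mp h) h'
  have hmemK : ∀ v, v ∈ K → ∃ a, c a = v := fun v hv => by
    rw [← hrange] at hv; exact hv
  have hKc : ∀ a : Fin m, c a ∈ K := fun a => hrange ▸ Set.mem_range_self a
  have htgt : ∀ u v, R u v → u ∉ K → v ∈ K := by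
    intro u v h hu
    by_contra hv
    exact hind u hu v hv (hAdj _ _ h)
  have hsrc : ∀ u v, R u v → v ∉ K → u ∈ K := by
    intro u v h hv
    by_contra hu
    exact hind u hu v hv (hAdj _ _ h)
  have hnotA : ∀ x b, R x (c b) → ¬ TypeA G R c x :=
    fun x b h hA => hnot _ _ h (hA.1 b (hAdj _ _ h))
  have hnotB : ∀ x b, R (c b) x → ¬ TypeB G R c x :=
    fun x b h hB => hnot _ _ h (hB.1 b ((hAdj _ _ h).symm))
  have hgetC : ∀ x, x ∉ K → ∀ a b, R (c a) x → R x (c b) →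
      ∃ s t : Fin m, s < t ∧ (∀ a, R (c a) x ↔ a ≤ s) ∧ (∀ a, R x (c a) ↔ t ≤ a) := by
    intro x hx a b h1 h2
    rcases htypes x hx with hA | hB | hC
    · exact (hnotA x b h2 hA).elim
    · exact (hnotB x a h1 hB).elim
    · exact hC
  set f : V → ℚ := fun v =>
    if h : ∃ a : Fin m, c a = v then ((Classical.choose h).val : ℚ)
    else if hC : TypeC G R c v then ((Classical.choose hC).val : ℚ) + 1/2
    else if TypeA G R c v then (m : ℚ) else -1 with hfdef
  have hfK : ∀ a : Fin m, f (c a) = (a.val : ℚ) := by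
    intro a
    have h : ∃ b : Fin m, c b = c a := ⟨a, rfl⟩
    have he : Classical.choose h = a := hinj (Classical.choose_spec h)
    simp only [hfdef, dif_pos h, he]
  have hfC : ∀ v, v ∉ K → TypeC G R c v →
      ∃ s t : Fin m, s < t ∧ (∀ a, R (c a) v ↔ a ≤ s) ∧ (∀ a, R v (c a) ↔ t ≤ a) ∧
        f v = (s.val : ℚ) + 1/2 := by
    intro v hv hC
    have hne : ¬ ∃ a : Fin m, c a = v := fun ⟨a, ha⟩ => hv (ha ▸ hKc a)
    have hfv : f v = ((Classical.choose hC).val : ℚ) + 1/2 := by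
      simp only [hfdef, dif_neg hne, dif_pos hC]
    obtain ⟨t, hst, hi, ho⟩ := Classical.choose_spec hC
    exact ⟨_, t, hst, hi, ho, hfv⟩
  have hfA : ∀ v, v ∉ K → ¬ TypeC G R c v → TypeA G R c v → f v = (m : ℚ) := by
    intro v hv hC hA
    have hne : ¬ ∃ a : Fin m, c a = v := fun ⟨a, ha⟩ => hv (ha ▸ hKc a)
    simp only [hfdef, dif_neg hne, dif_neg hC, if_pos hA]
  have hfB : ∀ v, v ∉ K → ¬ TypeC G R c v → ¬ TypeA G R c v → f v = -1 := by
    intro v hv hC hA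
    have hne : ¬ ∃ a : Fin m, c a = v := fun ⟨a, ha⟩ => hv (ha ▸ hKc a)
    simp only [hfdef, dif_neg hne, dif_neg hC, if_neg hA]
  have hf : ∀ u v, R u v → f u < f v := by
    intro u v huv
    by_cases hu : u ∈ K
    · obtain ⟨a, rfl⟩ := hmemK u hu
      by_cases hv : v ∈ K
      · obtain ⟨b, rfl⟩ := hmemK v hv
        rw [hfK, hfK]
        have : a.val < b.val := (hcl a b).mp huv
        exact_mod_cast this
      · by_cases hC : TypeC G R c v
        · obtain ⟨s, t, hst, hi, ho, hfv⟩ := hfC v hv hC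
          rw [hfK, hfv]
          have h1 : a ≤ s := (hi a).mp huv
          have h2 : (a.val : ℚ) ≤ s.val := by exact_mod_cast h1
          linarith
        · rcases htypes v hv with hA | hB | hC'
          · rw [hfK, hfA v hv hC hA]
            exact_mod_cast a.isLt
          · exact (hnotB v a huv hB).elim
          · exact (hC hC').elim
    · by_cases hv : v ∈ K
      · obtain ⟨b, rfl⟩ := hmemK v hv
        by_cases hC : TypeC G R c u
        · obtain ⟨s, t, hst, hi, ho, hfu⟩ := hfC u hu hC
          rw [hfu, hfK]
          have h1 : t.val ≤ b.val := (ho b).mp huv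
          have h2 : s.val < t.val := hst
          have h3 : (t.val : ℚ) ≤ b.val := by exact_mod_cast h1
          have h4 : (s.val : ℚ) + 1 ≤ t.val := by exact_mod_cast h2
          linarith
        · rcases htypes u hu with hA | hB | hC'
          · exact (hnotA u b huv hA).elim
          · rw [hfB u hu hC (hnotA u b huv), hfK]
            have : (0 : ℚ) ≤ b.val := by positivity
            linarith
          · exact (hC hC').elim
      · exact (hind u hu v hv (hAdj _ _ huv)).elim
  constructor
  · intro v hv
    have key : ∀ a b, Relation.TransGen R a b → f a < f b := by
      intro a b h
      induction h with
      | single h => exact hf _ _ h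
      | tail _ h2 ih => exact lt_trans ih (hf _ _ h2)
    exact absurd (key v v hv) (lt_irrefl _)
  · intro k p hpath hshort i j hij
    set P : ℕ → V := fun n => p ⟨min n k, Nat.lt_succ_of_le (Nat.min_le_right n k)⟩
      with hPdef
    have hP : ∀ n (hn : n ≤ k), P n = p ⟨n, Nat.lt_succ_of_le hn⟩ := by
      intro n hn
      simp only [hPdef]
      exact congrArg p (Fin.ext (by simp [Nat.min_eq_left hn]))
    have hstep : ∀ n, n < k → R (P n) (P (n+1)) := by
      intro n hn
      rw [hP n hn.le, hP (n+1) hn]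
      exact hpath ⟨n, hn⟩
    have hshortP : R (P 0) (P k) := by
      rw [hP 0 (Nat.zero_le k), hP k le_rfl]
      have h0 : (⟨0, Nat.lt_succ_of_le (Nat.zero_le k)⟩ : Fin (k+1)) = 0 :=
        Fin.ext (by simp)
      have hk : (⟨k, Nat.lt_succ_of_le le_rfl⟩ : Fin (k+1)) = Fin.last k :=
        Fin.ext (by simp [Fin.last])
      rw [h0, hk]
      exact hshort
    have hmono : ∀ b a, a < b → b ≤ k → f (P a) < f (P b) := by
      intro b
      induction b with
      | zero => exact fun a ha _ => absurd ha (Nat.not_lt_zero a)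
      | succ n ih =>
        intro a ha hb
        rcases Nat.lt_succ_iff_lt_or_eq.mp ha with h | h
        · exact lt_trans (ih a h (by omega)) (hf _ _ (hstep n (by omega)))
        · subst h
          exact hf _ _ (hstep a (by omega))
    have hidx : ∀ n1 n2 : ℕ, n1 ≤ n2 → n2 ≤ k → ∀ b1 b2 : Fin m,
        c b1 = P n1 → c b2 = P n2 → b1 ≤ b2 := by
      intro n1 n2 hle hn2 b1 b2 hb1 hb2
      rcases Nat.lt_or_ge n1 n2 with h | h
      · have hm := hmono n2 n1 h hn2
        rw [← hb1, ← hb2, hfK, hfK] at hm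
        have : b1.val < b2.val := by exact_mod_cast hm
        exact le_of_lt this
      · have hn : n1 = n2 := by omega
        subst hn
        exact le_of_eq (hinj (hb1.trans hb2.symm))
    have hone : ∀ n1 n2 : ℕ, n1 < n2 → n2 ≤ k → P n1 ∉ K → P n2 ∉ K → False := by
      intro n1 n2 hlt hn2 hxK hyK
      have hfxy : f (P n1) < f (P n2) := hmono n2 n1 hlt hn2
      have hxy : P n1 ≠ P n2 := fun h => absurd hfxy (by rw [h]; exact lt_irrefl _)
      have hxout : R (P n1) (P (n1+1)) := hstep n1 (by omega)
      have hm1 : P (n1+1) ∈ K := htgt _ _ hxout hxK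
      obtain ⟨b1, hb1⟩ := hmemK _ hm1
      have hxb1 : R (P n1) (c b1) := by rwa [hb1]
      have hyin : R (P (n2-1)) (P n2) := by
        have h := hstep (n2-1) (by omega)
        rwa [show n2-1+1 = n2 by omega] at h
      have hm2 : P (n2-1) ∈ K := hsrc _ _ hyin hyK
      obtain ⟨a2, ha2⟩ := hmemK _ hm2
      have hya2 : R (c a2) (P n2) := by rwa [ha2]
      have hne12 : n1 + 1 ≠ n2 := fun h => hyK (h ▸ hm1)
      have hb1a2 : b1 ≤ a2 := hidx (n1+1) (n2-1) (by omega) (by omega) b1 a2 hb1 ha2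
      by_cases hjk : n2 < k
      · have hyout : R (P n2) (P (n2+1)) := hstep n2 hjk
        have hm3 : P (n2+1) ∈ K := htgt _ _ hyout hyK
        obtain ⟨b2, hb2⟩ := hmemK _ hm3
        have hyb2 : R (P n2) (c b2) := by rwa [hb2]
        obtain ⟨sy, ty, hsty, hiy, hoy⟩ := hgetC _ hyK a2 b2 hya2 hyb2
        have ha2sy : a2 ≤ sy := (hiy a2).mp hya2
        have hb1sy : b1 ≤ sy := le_trans hb1a2 ha2sy
        have htyb2 : ty ≤ b2 := (hoy b2).mp hyb2
        rcases htypes _ hxK with hA | hB | hC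
        · exact hnotA _ b1 hxb1 hA
        · have hi0 : n1 = 0 := by
            by_contra h
            have hxin := hstep (n1-1) (by omega)
            rw [show n1-1+1 = n1 by omega] at hxin
            obtain ⟨a0, ha0⟩ := hmemK _ (hsrc _ _ hxin hxK)
            exact hnotB _ a0 (by rwa [ha0]) hB
          subst hi0
          have hmk : P k ∈ K := by
            by_contra h
            exact hind _ hxK _ h (hAdj _ _ hshortP)
          obtain ⟨e, he⟩ := hmemK _ hmk
          have hxe : R (P 0) (c e) := by rw [he]; exact hshortP
          have hb2e : b2 ≤ e := hidx (n2+1) k (by omega) le_rfl b2 e hb2 he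
          have hsye : sy ≤ e := le_trans (le_trans hsty.le htyb2) hb2e
          have hadjs : G.Adj (P 0) (c sy) :=
            hB.2 b1 sy e hb1sy hsye (hAdj _ _ hxb1) (hAdj _ _ hxe)
          have hadjt : G.Adj (P 0) (c ty) :=
            hB.2 b1 ty e (le_trans hb1sy hsty.le) (le_trans htyb2 hb2e)
              (hAdj _ _ hxb1) (hAdj _ _ hxe)
          exact (hcond _ hyK sy ty hsty hiy hoy _ hxK hxy).1 (Or.inr hB) ⟨hadjs, hadjt⟩
        · obtain ⟨sx, tx, hstx, hix, hox⟩ := hC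
          have htx : tx ≤ sy := le_trans (le_trans ((hox b1).mp hxb1) hb1a2) ha2sy
          exact ((hcond _ hyK sy ty hsty hiy hoy _ hxK hxy).2 sx tx hstx hix hox).2 htx
      · have hk : n2 = k := by omega
        have hshortP' : R (P 0) (P n2) := by rw [hk]; exact hshortP
        by_cases hi0 : n1 = 0
        · subst hi0
          exact hind _ hxK _ hyK (hAdj _ _ hshortP')
        · have hxin := hstep (n1-1) (by omega)
          rw [show n1-1+1 = n1 by omega] at hxin
          obtain ⟨a0, ha0⟩ := hmemK _ (hsrc _ _ hxin hxK)
          have hxa0 : R (c a0) (P n1) := by rwa [ha0]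
          obtain ⟨sx, tx, hstx, hix, hox⟩ := hgetC _ hxK a0 b1 hxa0 hxb1
          have htxa2 : tx ≤ a2 := le_trans ((hox b1).mp hxb1) hb1a2
          rcases htypes _ hyK with hA | hB | hC
          · have hm0 : P 0 ∈ K := hsrc _ _ hshortP' hyK
            obtain ⟨e0, he0⟩ := hmemK _ hm0
            have hye0 : R (c e0) (P n2) := by rw [he0]; exact hshortP'
            have he0a0 : e0 ≤ a0 := hidx 0 (n1-1) (by omega) (by omega) e0 a0 he0 ha0
            have he0sx : e0 ≤ sx := le_trans he0a0 ((hix a0).mp hxa0)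
            have hadjs : G.Adj (P n2) (c sx) :=
              hA.2 e0 sx a2 he0sx (le_trans hstx.le htxa2)
                (hAdj _ _ hye0).symm (hAdj _ _ hya2).symm
            have hadjt : G.Adj (P n2) (c tx) :=
              hA.2 e0 tx a2 (le_trans he0sx hstx.le) htxa2
                (hAdj _ _ hye0).symm (hAdj _ _ hya2).symm
            exact (hcond _ hxK sx tx hstx hix hox _ hyK (Ne.symm hxy)).1
              (Or.inl hA) ⟨hadjs, hadjt⟩
          · exact hnotB _ a2 hya2 hB
          · obtain ⟨sy, ty, hsty, hiy, hoy⟩ := hC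
            exact ((hcond _ hxK sx tx hstx hix hox _ hyK (Ne.symm hxy)).2
              sy ty hsty hiy hoy).1 (le_trans htxa2 ((hiy a2).mp hya2))
    have hP' : ∀ (i : Fin (k+1)), p i = P i.val := by
      intro i
      rw [hP i.val (Nat.lt_succ_iff.mp i.isLt)]
    rw [hP' i, hP' j]
    have hij' : i.val < j.val := hij
    have hjk : j.val ≤ k := Nat.lt_succ_iff.mp j.isLt
    by_cases hxK : P i.val ∈ K
    · obtain ⟨a, ha⟩ := hmemK _ hxK
      by_cases hyK : P j.val ∈ K
      · obtain ⟨b, hb⟩ := hmemK _ hyK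
        rw [← ha, ← hb]
        apply (hcl a b).mpr
        have hm := hmono j.val i.val hij' hjk
        rw [← ha, ← hb, hfK, hfK] at hm
        have : a.val < b.val := by exact_mod_cast hm
        exact this
      · have hyin : R (P (j.val - 1)) (P j.val) := by
          have h := hstep (j.val - 1) (by omega)
          rwa [show j.val - 1 + 1 = j.val by omega] at h
        have hm2 : P (j.val - 1) ∈ K := hsrc _ _ hyin hyK
        obtain ⟨a1, ha1⟩ := hmemK _ hm2
        have hya1 : R (c a1) (P j.val) := by rwa [ha1]
        rcases htypes _ hyK with hA | hB | hC
        · have hjval : j.val = k := by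
            by_contra h
            have hout := hstep j.val (by omega)
            obtain ⟨b2, hb2⟩ := hmemK _ (htgt _ _ hout hyK)
            exact hnotA _ b2 (by rwa [hb2]) hA
          have hmem0 : P 0 ∈ K := by
            by_contra h
            exact hone 0 j.val (by omega) hjk h hyK
          obtain ⟨a0, ha0⟩ := hmemK _ hmem0
          have hya0 : R (c a0) (P j.val) := by
            rw [ha0, hjval]
            exact hshortP
          have h1 : a0 ≤ a := hidx 0 i.val (by omega) (by omega) a0 a ha0 ha
          have h2 : a ≤ a1 := hidx i.val (j.val - 1) (by omega) (by omega) a a1 ha ha1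
          have hadj := hA.2 a0 a a1 h1 h2 (hAdj _ _ hya0).symm (hAdj _ _ hya1).symm
          rw [← ha]
          exact hA.1 a hadj
        · exact (hnotB _ a1 hya1 hB).elim
        · obtain ⟨s0, t0, hst0, hi0, ho0, hfv⟩ := hfC _ hyK hC
          have hm := hmono j.val i.val hij' hjk
          rw [← ha, hfK, hfv] at hm
          have hval : a ≤ s0 := by
            have h1 : (a.val : ℚ) < s0.val + 1 := by linarith
            have h2 : a.val < s0.val + 1 := by exact_mod_cast h1
            exact Nat.lt_succ_iff.mp h2
          rw [← ha]
          exact (hi0 a).mpr hval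
    · by_cases hyK : P j.val ∈ K
      · obtain ⟨b, hb⟩ := hmemK _ hyK
        have hxout : R (P i.val) (P (i.val + 1)) := hstep i.val (by omega)
        obtain ⟨b1, hb1⟩ := hmemK _ (htgt _ _ hxout hxK)
        have hxb1 : R (P i.val) (c b1) := by rwa [hb1]
        rcases htypes _ hxK with hA | hB | hC
        · exact (hnotA _ b1 hxb1 hA).elim
        · have hi0 : i.val = 0 := by
            by_contra h
            have hxin := hstep (i.val - 1) (by omega)
            rw [show i.val - 1 + 1 = i.val by omega] at hxin
            obtain ⟨a1, ha1⟩ := hmemK _ (hsrc _ _ hxin hxK)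
            exact hnotB _ a1 (by rwa [ha1]) hB
          have hmk : P k ∈ K := by
            by_contra h
            exact hone i.val k (by omega) le_rfl hxK h
          obtain ⟨b2, hb2⟩ := hmemK _ hmk
          have hxb2 : R (P i.val) (c b2) := by
            rw [hb2, hi0]
            exact hshortP
          have h1 : b1 ≤ b := hidx (i.val + 1) j.val (by omega) (by omega) b1 b hb1 hb
          have h2 : b ≤ b2 := hidx j.val k hjk le_rfl b b2 hb hb2
          have hadj := hB.2 b1 b b2 h1 h2 (hAdj _ _ hxb1) (hAdj _ _ hxb2)
          rw [← hb]
          exact hB.1 b hadj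
        · obtain ⟨s, t, hst, hi', ho'⟩ := hC
          have h1 : t ≤ b1 := (ho' b1).mp hxb1
          have h2 : b1 ≤ b := hidx (i.val + 1) j.val (by omega) (by omega) b1 b hb1 hb
          rw [← hb]
          exact (ho' b).mpr (le_trans h1 h2)
      · exact (hone i.val j.val hij' hjk hxK hyK).elim

/-- Classification of semi-transitive orientations of a split graph `S=(E,K)`:
an orientation is semi-transitive iff (1) the clique `K` is transitively
oriented (enumerate it by `c` along its Hamiltonian path), (2) every vertex of
the independent set is of type A, B or C, and (3) for every type C vertex `x`
with break pair `(c s, c t)`, no type A or B vertex is adjacent to both `c s`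
and `c t`, and no other type C vertex has both `c s` and `c t` inside its
source-group or both inside its sink-group. -/
theorem semiTransitive_split_iff {V : Type*} [Fintype V]
    (G : SimpleGraph V) (K : Set V)
    (hclique : ∀ u ∈ K, ∀ v ∈ K, u ≠ v → G.Adj u v)
    (hind : ∀ u ∉ K, ∀ v ∉ K, ¬ G.Adj u v)
    (R : V → V → Prop) (hor : IsOrientation G R) :
    SemiTransitive R ↔
    ∃ (m : ℕ) (c : Fin m → V), Function.Injective c ∧ Set.range c = K ∧
      (∀ a b : Fin m, R (c a) (c b) ↔ a < b) ∧
      (∀ x, x ∉ K → (TypeA G R c x ∨ TypeB G R c x ∨ TypeC G R c x)) ∧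
      (∀ x, x ∉ K → ∀ s t : Fin m, s < t →
        (∀ a : Fin m, R (c a) x ↔ a ≤ s) →
        (∀ a : Fin m, R x (c a) ↔ t ≤ a) →
        ∀ y, y ∉ K → y ≠ x →
          (((TypeA G R c y ∨ TypeB G R c y) →
              ¬ (G.Adj y (c s) ∧ G.Adj y (c t))) ∧
           (∀ s' t' : Fin m, s' < t' →
              (∀ a : Fin m, R (c a) y ↔ a ≤ s') →
              (∀ a : Fin m, R y (c a) ↔ t' ≤ a) →
              ¬ t ≤ s' ∧ ¬ t' ≤ s))) := by
  constructor
  · intro hST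
    exact split_fw G K hclique hind R hor hST
  · rintro ⟨m, c, hinj, hrange, hcl, htypes, hcond⟩
    exact split_bw G K hind R hor c hinj hrange hcl htypes hcond
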